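/- With u_n as defined in the context, the sum over all rationals x of |2^{-1/p}·(u_n(2x) + u_n(2x−1)) − u_n(x)|^p equals 2/n. In other words, ‖2^{-1/p}·D₂u_n − u_n‖_{ℓ^p(ℚ)} = (2/n)^{1/p}, so these vectors form an approximate eigenvector of D₂ with approximate eigenvalue 2^{1/p}. -/

import Mathlib

/-- The support set of `D₂^l D₃^m e_{1/6}`:
`S(l,m) = {((1/6 + i)·2^{-l} + j)·3^{-m} : i < 2^l, j < 3^m}`. -/
def lorSupportSet (l m : ℕ) : Set ℚ :=
  {x | ∃ i j : ℕ, i < 2 ^ l ∧ j < 3 ^ m ∧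
    x = ((1 / 6 + (i : ℚ)) * (2 : ℚ) ^ (-(l : ℤ)) + (j : ℚ)) * (3 : ℚ) ^ (-(m : ℤ))}

/-- `u_n(x) = n^{-2/p} Σ_{j=1}^n Σ_{k=1}^n 2^{-j/p} 3^{-k/p} 1_{S(j,k)}(x)`. -/
noncomputable def krivineVec (p : ℝ) (n : ℕ) (x : ℚ) : ℝ :=
  (n : ℝ) ^ (-(2 / p)) *
    ∑ j ∈ Finset.Icc 1 n, ∑ k ∈ Finset.Icc 1 n,
      (2 : ℝ) ^ (-(j : ℝ) / p) * (3 : ℝ) ^ (-(k : ℝ) / p) *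
        (lorSupportSet j k).indicator (fun _ => (1 : ℝ)) x

namespace KrAux

lemma mem_iff (l m : ℕ) (x : ℚ) :
    x ∈ lorSupportSet l m ↔ ∃ t : ℕ, t < 2 ^ l * 3 ^ m ∧
      x = ((1 + 6 * t : ℕ) : ℚ) / ((2 ^ (l + 1) * 3 ^ (m + 1) : ℕ) : ℚ) := by
  constructor
  · rintro ⟨i, j, hi, hj, rfl⟩
    refine ⟨i + 2 ^ l * j, ?_, ?_⟩
    · have h1 : 2 ^ l * (1 + j) = 2 ^ l + 2 ^ l * j := by ring
      have h2 : 2 ^ l * (1 + j) ≤ 2 ^ l * 3 ^ m := Nat.mul_le_mul_left _ (by omega)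
      omega
    · rw [zpow_neg, zpow_neg, zpow_natCast, zpow_natCast]
      have h2 : ((2 : ℚ) ^ l) ≠ 0 := by positivity
      have h3 : ((3 : ℚ) ^ m) ≠ 0 := by positivity
      push_cast
      field_simp
      ring
  · rintro ⟨t, ht, rfl⟩
    refine ⟨t % 2 ^ l, t / 2 ^ l, Nat.mod_lt _ (by positivity),
      Nat.div_lt_of_lt_mul ht, ?_⟩
    rw [zpow_neg, zpow_neg, zpow_natCast, zpow_natCast]
    have h2 : ((2 : ℚ) ^ l) ≠ 0 := by positivity
    have h3 : ((3 : ℚ) ^ m) ≠ 0 := by positivity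
    have hmd : ((t % 2 ^ l : ℕ) : ℚ) + 2 ^ l * ((t / 2 ^ l : ℕ) : ℚ) = t := by
      exact_mod_cast congrArg (Nat.cast : ℕ → ℚ) (Nat.mod_add_div t (2 ^ l))
    push_cast
    push_cast at hmd
    field_simp
    linear_combination (-(36 : ℚ) * 2 ^ l * 3 ^ m) * hmd

lemma coprime' (t l m : ℕ) : Nat.Coprime (1 + 6 * t) (2 ^ (l + 1) * 3 ^ (m + 1)) := by
  have h2 : Nat.Coprime (1 + 6 * t) 2 := by
    rw [Nat.coprime_comm, Nat.Prime.coprime_iff_not_dvd Nat.prime_two]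
    omega
  have h3 : Nat.Coprime (1 + 6 * t) 3 := by
    rw [Nat.coprime_comm, Nat.Prime.coprime_iff_not_dvd Nat.prime_three]
    omega
  exact Nat.Coprime.mul_right (h2.pow_right _) (h3.pow_right _)

lemma pow23_inj {a b c d : ℕ} (h : 2 ^ a * 3 ^ b = 2 ^ c * 3 ^ d) : a = c ∧ b = d := by
  have cop : ∀ u v : ℕ, Nat.Coprime (2 ^ u) (3 ^ v) := fun u v =>
    Nat.Coprime.pow _ _ ((Nat.coprime_primes Nat.prime_two Nat.prime_three).mpr (by norm_num))
  have key : ∀ a b c d : ℕ, 2 ^ a * 3 ^ b = 2 ^ c * 3 ^ d → a ≤ c := by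
    intro a b c d h
    have hdvd : 2 ^ a ∣ 2 ^ c * 3 ^ d := h ▸ Dvd.intro _ rfl
    have : (2 : ℕ) ^ a ∣ 2 ^ c := (Nat.Coprime.dvd_of_dvd_mul_right (cop a d) hdvd)
    exact (Nat.pow_dvd_pow_iff_le_right (by norm_num)).mp this
  have hac : a = c := le_antisymm (key a b c d h) (key c d a b h.symm)
  subst hac
  have : (3:ℕ) ^ b = 3 ^ d := by
    have := Nat.eq_of_mul_eq_mul_left (by positivity : 0 < 2 ^ a) h
    exact this
  exact ⟨rfl, Nat.pow_right_injective (by norm_num) this⟩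

lemma point_inj {t l m t' l' m' : ℕ}
    (h : ((1 + 6 * t : ℕ) : ℚ) / ((2 ^ (l + 1) * 3 ^ (m + 1) : ℕ) : ℚ)
       = ((1 + 6 * t' : ℕ) : ℚ) / ((2 ^ (l' + 1) * 3 ^ (m' + 1) : ℕ) : ℚ)) :
    t = t' ∧ l = l' ∧ m = m' := by
  have h1 := Rat.div_int_inj (a := (1 + 6 * t : ℕ)) (b := (2 ^ (l + 1) * 3 ^ (m + 1) : ℕ))
    (c := (1 + 6 * t' : ℕ)) (d := (2 ^ (l' + 1) * 3 ^ (m' + 1) : ℕ))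
    (by positivity) (by positivity)
    (by exact_mod_cast coprime' t l m) (by exact_mod_cast coprime' t' l' m') (by push_cast at h ⊢; exact_mod_cast h)
  obtain ⟨hnum, hden⟩ := h1
  have hnum' : 1 + 6 * t = 1 + 6 * t' := by exact_mod_cast hnum
  have hden' : 2 ^ (l + 1) * 3 ^ (m + 1) = 2 ^ (l' + 1) * 3 ^ (m' + 1) := by exact_mod_cast hden
  obtain ⟨h1, h2⟩ := pow23_inj hden'
  exact ⟨by omega, by omega, by omega⟩


noncomputable def ind (l m : ℕ) (x : ℚ) : ℝ :=
  (lorSupportSet l m).indicator (fun _ => (1 : ℝ)) x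

lemma mem_bounds {l m : ℕ} {x : ℚ} (h : x ∈ lorSupportSet l m) : 0 < x ∧ x < 1 := by
  obtain ⟨t, ht, rfl⟩ := (mem_iff l m x).mp h
  constructor
  · positivity
  · rw [div_lt_one (by positivity)]
    have h6 : (2:ℕ) ^ (l+1) * 3 ^ (m+1) = 6 * (2 ^ l * 3 ^ m) := by ring
    have : (1 + 6 * t : ℕ) < 2 ^ (l+1) * 3 ^ (m+1) := by omega
    exact_mod_cast this

lemma mem_unique {l m l' m' : ℕ} {x : ℚ} (h : x ∈ lorSupportSet l m)
    (h' : x ∈ lorSupportSet l' m') : l = l' ∧ m = m' := by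
  obtain ⟨t, ht, rfl⟩ := (mem_iff l m x).mp h
  obtain ⟨t', ht', he⟩ := (mem_iff l' m' _).mp h'
  obtain ⟨-, h1, h2⟩ := point_inj he
  exact ⟨h1, h2⟩

lemma D2 (l m : ℕ) (x : ℚ) : ind l m (2*x) + ind l m (2*x-1) = ind (l+1) m x := by
  have hexc : ∀ (a b : ℕ) (c d : ℕ), 2*x ∈ lorSupportSet a b → 2*x - 1 ∉ lorSupportSet c d := by
    intro a b c d hm hm'
    have h1 := (mem_bounds hm).2
    have h2 := (mem_bounds hm').1
    linarith
  by_cases hx : x ∈ lorSupportSet (l+1) m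
  · obtain ⟨t, ht, hxe⟩ := (mem_iff (l+1) m x).mp hx
    by_cases hc : t < 2 ^ l * 3 ^ m
    · have h1 : 2*x ∈ lorSupportSet l m := by
        rw [mem_iff]
        refine ⟨t, hc, ?_⟩
        rw [hxe]; push_cast; field_simp; ring
      have h2 : 2*x - 1 ∉ lorSupportSet l m := hexc _ _ _ _ h1
      unfold ind
      rw [Set.indicator_of_mem h1, Set.indicator_of_mem hx, Set.indicator_of_notMem h2]
      norm_num
    · have h1 : 2*x - 1 ∈ lorSupportSet l m := by
        rw [mem_iff]
        have hlt : t - 2 ^ l * 3 ^ m < 2 ^ l * 3 ^ m := by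
          have : t < 2 ^ (l+1) * 3 ^ m := ht
          have h6 : (2:ℕ) ^ (l+1) * 3 ^ m = 2 * (2 ^ l * 3 ^ m) := by ring
          omega
        refine ⟨t - 2 ^ l * 3 ^ m, hlt, ?_⟩
        have hcast : ((t - 2 ^ l * 3 ^ m : ℕ) : ℚ) = (t : ℚ) - 2 ^ l * 3 ^ m := by
          push_cast [Nat.cast_sub (le_of_not_gt hc)]; ring
        rw [hxe]; push_cast [hcast]; field_simp; ring
      have h2 : 2*x ∉ lorSupportSet l m := fun hm => hexc _ _ _ _ hm h1
      unfold ind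
      rw [Set.indicator_of_mem h1, Set.indicator_of_mem hx, Set.indicator_of_notMem h2]
      norm_num
  · have h1 : 2*x ∉ lorSupportSet l m := by
      intro hm
      obtain ⟨t, ht, he⟩ := (mem_iff l m _).mp hm
      apply hx
      rw [mem_iff]
      refine ⟨t, by calc t < 2^l*3^m := ht
        _ ≤ 2^(l+1)*3^m := by gcongr <;> norm_num, ?_⟩
      rw [eq_div_iff (by positivity)]
      rw [eq_div_iff (by positivity)] at he
      push_cast at he ⊢
      linear_combination he
    have h2 : 2*x - 1 ∉ lorSupportSet l m := by
      intro hm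
      obtain ⟨t, ht, he⟩ := (mem_iff l m _).mp hm
      apply hx
      rw [mem_iff]
      refine ⟨t + 2 ^ l * 3 ^ m, ?_, ?_⟩
      · have h6 : (2:ℕ) ^ (l+1) * 3 ^ m = 2 * (2 ^ l * 3 ^ m) := by ring
        omega
      · rw [eq_div_iff (by positivity)]
        rw [eq_div_iff (by positivity)] at he
        push_cast at he ⊢
        linear_combination he
    unfold ind
    rw [Set.indicator_of_notMem h1, Set.indicator_of_notMem h2, Set.indicator_of_notMem hx]
    norm_num

noncomputable def pts (l m : ℕ) : Finset ℚ :=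
  (Finset.range (2 ^ l * 3 ^ m)).image
    (fun t => ((1 + 6 * t : ℕ) : ℚ) / ((2 ^ (l + 1) * 3 ^ (m + 1) : ℕ) : ℚ))

lemma mem_pts {l m : ℕ} {x : ℚ} : x ∈ pts l m ↔ x ∈ lorSupportSet l m := by
  rw [mem_iff, pts]
  simp only [Finset.mem_image, Finset.mem_range]
  constructor
  · rintro ⟨t, ht, rfl⟩; exact ⟨t, ht, rfl⟩
  · rintro ⟨t, ht, rfl⟩; exact ⟨t, ht, rfl⟩

lemma card_pts (l m : ℕ) : (pts l m).card = 2 ^ l * 3 ^ m := by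
  rw [pts, Finset.card_image_of_injOn, Finset.card_range]
  intro a _ b _ h
  exact (point_inj h).1

lemma summable_ind (c : ℝ) (l m : ℕ) : Summable (fun x : ℚ => c * ind l m x) := by
  apply summable_of_ne_finset_zero (s := pts l m)
  intro x hx
  have : x ∉ lorSupportSet l m := fun h => hx (mem_pts.mpr h)
  simp [ind, Set.indicator_of_notMem this]

lemma tsum_ind (c : ℝ) (l m : ℕ) :
    ∑' x : ℚ, c * ind l m x = c * ((2 ^ l * 3 ^ m : ℕ) : ℝ) := by
  rw [tsum_eq_sum (s := pts l m) (fun x hx => by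
    have : x ∉ lorSupportSet l m := fun h => hx (mem_pts.mpr h)
    simp [ind, Set.indicator_of_notMem this])]
  have hc : ∀ x ∈ pts l m, c * ind l m x = c * 1 := fun x hx => by
    simp [ind, Set.indicator_of_mem (mem_pts.mp hx)]
  rw [Finset.sum_congr rfl hc, Finset.sum_const, card_pts]
  push_cast; ring


noncomputable def fk (p : ℝ) (j k : ℕ) (x : ℚ) : ℝ :=
  (2 : ℝ) ^ (-(j : ℝ) / p) * (3 : ℝ) ^ (-(k : ℝ) / p) * ind j k x

lemma telescope (g : ℕ → ℝ) (n : ℕ) :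
    ∑ j ∈ Finset.Icc 1 n, (g (j+1) - g j) = g (n+1) - g 1 := by
  induction n with
  | zero => simp
  | succ n ih =>
    rw [Finset.sum_Icc_succ_top (by omega), ih]
    ring

lemma fk_D2 (p : ℝ) (j k : ℕ) (x : ℚ) :
    (2:ℝ)^(-(1/p)) * fk p j k (2*x) + (2:ℝ)^(-(1/p)) * fk p j k (2*x-1)
      = fk p (j+1) k x := by
  have h2 : (2:ℝ)^(-(1/p)) * (2:ℝ)^(-(j:ℝ)/p) = (2:ℝ)^(-(((j+1):ℕ):ℝ)/p) := by
    rw [← Real.rpow_add (by norm_num)]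
    congr 1
    push_cast
    ring
  unfold fk
  calc (2:ℝ)^(-(1/p)) * ((2:ℝ)^(-(j:ℝ)/p) * (3:ℝ)^(-(k:ℝ)/p) * ind j k (2*x))
        + (2:ℝ)^(-(1/p)) * ((2:ℝ)^(-(j:ℝ)/p) * (3:ℝ)^(-(k:ℝ)/p) * ind j k (2*x-1))
      = ((2:ℝ)^(-(1/p)) * (2:ℝ)^(-(j:ℝ)/p)) * (3:ℝ)^(-(k:ℝ)/p)
          * (ind j k (2*x) + ind j k (2*x-1)) := by ring
    _ = (2:ℝ)^(-(((j+1):ℕ):ℝ)/p) * (3:ℝ)^(-(k:ℝ)/p) * ind (j+1) k x := by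
        rw [h2, D2]

lemma fk_eq_zero_of_not_mem {p : ℝ} {j k : ℕ} {x : ℚ} (h : x ∉ lorSupportSet j k) :
    fk p j k x = 0 := by
  simp [fk, ind, Set.indicator_of_notMem h]

lemma abs_fk (p : ℝ) (hp : 0 < p) (j k : ℕ) (x : ℚ) :
    |fk p j k x| ^ p = ((2:ℝ)^(-(j:ℝ)) * (3:ℝ)^(-(k:ℝ))) * ind j k x := by
  by_cases hx : x ∈ lorSupportSet j k
  · unfold fk ind
    rw [Set.indicator_of_mem hx, mul_one, mul_one]
    rw [abs_of_nonneg (by positivity)]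
    rw [Real.mul_rpow (by positivity) (by positivity),
      ← Real.rpow_mul (by norm_num), ← Real.rpow_mul (by norm_num),
      div_mul_cancel₀ _ hp.ne', div_mul_cancel₀ _ hp.ne']
  · rw [fk_eq_zero_of_not_mem hx]
    simp [ind, Set.indicator_of_notMem hx, Real.zero_rpow hp.ne']

lemma abs_rpow_sum {ι : Type*} (s : Finset ι) (g : ι → ℝ) (p : ℝ) (hp : p ≠ 0)
    (h : ∀ a ∈ s, ∀ b ∈ s, a ≠ b → g a = 0 ∨ g b = 0) :
    |∑ a ∈ s, g a| ^ p = ∑ a ∈ s, |g a| ^ p := by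
  by_cases he : ∃ a ∈ s, g a ≠ 0
  · obtain ⟨a₀, ha₀, hne⟩ := he
    have hz : ∀ b ∈ s, b ≠ a₀ → g b = 0 := fun b hb hba =>
      (h b hb a₀ ha₀ hba).resolve_right hne
    rw [Finset.sum_eq_single_of_mem a₀ ha₀ hz,
      Finset.sum_eq_single_of_mem a₀ ha₀ (fun b hb hba => by
        rw [hz b hb hba, abs_zero, Real.zero_rpow hp])]
  · push_neg at he
    rw [Finset.sum_eq_zero he, Finset.sum_eq_zero (fun a ha => by
      rw [he a ha, abs_zero, Real.zero_rpow hp]), abs_zero, Real.zero_rpow hp]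


end KrAux

open KrAux

/-- `Σ_x |2^{-1/p}(D₂u_n)(x) − u_n(x)|^p = 2/n`, where `(D₂u)(x) = u(2x) + u(2x−1)`;
equivalently `‖2^{-1/p}·D₂u_n − u_n‖_{ℓ^p(ℚ)} = (2/n)^{1/p}`. -/
theorem stmt3 (p : ℝ) (hp : 1 ≤ p) (n : ℕ) (hn : 1 ≤ n) :
    ∑' x : ℚ,
      |(2 : ℝ) ^ (-(1 / p)) * (krivineVec p n (2 * x) + krivineVec p n (2 * x - 1)) -
        krivineVec p n x| ^ p = 2 / n := by

  have hp0 : 0 < p := lt_of_lt_of_le one_pos hp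
  have hKV : ∀ y : ℚ, krivineVec p n y
      = (n : ℝ) ^ (-(2 / p)) * ∑ k ∈ Finset.Icc 1 n, ∑ j ∈ Finset.Icc 1 n, fk p j k y := by
    intro y
    unfold krivineVec
    congr 1
    rw [Finset.sum_comm]
    rfl
  have inner : ∀ x : ℚ,
      (2 : ℝ) ^ (-(1 / p)) * (krivineVec p n (2 * x) + krivineVec p n (2 * x - 1)) -
        krivineVec p n x
      = (n : ℝ) ^ (-(2 / p)) * ∑ k ∈ Finset.Icc 1 n, (fk p (n+1) k x - fk p 1 k x) := by
    intro x
    rw [hKV, hKV, hKV]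
    have hr : ∀ (c N A B C : ℝ), c * (N * A + N * B) - N * C = N * (c * A + c * B - C) :=
      fun _ _ _ _ _ => by ring
    rw [hr]
    congr 1
    rw [Finset.mul_sum, Finset.mul_sum, ← Finset.sum_add_distrib, ← Finset.sum_sub_distrib]
    apply Finset.sum_congr rfl
    intro k _
    rw [Finset.mul_sum, Finset.mul_sum, ← Finset.sum_add_distrib, ← Finset.sum_sub_distrib]
    have hstep : ∀ j ∈ Finset.Icc 1 n,
        (2:ℝ)^(-(1/p)) * fk p j k (2*x) + (2:ℝ)^(-(1/p)) * fk p j k (2*x-1) - fk p j k x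
        = (fun j => fk p j k x) (j+1) - (fun j => fk p j k x) j := by
      intro j _
      simp only
      rw [fk_D2]
    rw [Finset.sum_congr rfl hstep]
    exact telescope (fun j => fk p j k x) n
  have key : ∀ x : ℚ,
      |(2 : ℝ) ^ (-(1 / p)) * (krivineVec p n (2 * x) + krivineVec p n (2 * x - 1)) -
        krivineVec p n x| ^ p
      = ∑ k ∈ Finset.Icc 1 n,
          (((n:ℝ)^(-(2:ℝ)) * ((2:ℝ)^(-(((n+1):ℕ):ℝ)) * (3:ℝ)^(-(k:ℝ)))) * ind (n+1) k x
           + ((n:ℝ)^(-(2:ℝ)) * ((2:ℝ)^(-(((1):ℕ):ℝ)) * (3:ℝ)^(-(k:ℝ)))) * ind 1 k x) := by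
    intro x
    rw [inner x, abs_mul, Real.mul_rpow (abs_nonneg _) (abs_nonneg _),
      abs_of_nonneg (Real.rpow_nonneg (Nat.cast_nonneg n) _)]
    have hnp : ((n:ℝ)^(-(2/p)))^p = (n:ℝ)^(-(2:ℝ)) := by
      rw [← Real.rpow_mul (Nat.cast_nonneg n), neg_mul, div_mul_cancel₀ _ hp0.ne']
    rw [hnp]
    set s : Finset (ℕ × Bool) := (Finset.Icc 1 n) ×ˢ (Finset.univ : Finset Bool) with hs
    set g : ℕ × Bool → ℝ :=
      fun a => if a.2 then fk p (n+1) a.1 x else -fk p 1 a.1 x with hgdef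
    have hg : ∑ k ∈ Finset.Icc 1 n, (fk p (n+1) k x - fk p 1 k x) = ∑ a ∈ s, g a := by
      rw [hs, Finset.sum_product]
      apply Finset.sum_congr rfl
      intro k _
      rw [Fintype.sum_bool]
      have gt : g (k, true) = fk p (n+1) k x := by simp [hgdef]
      have gf : g (k, false) = -fk p 1 k x := by simp [hgdef]
      rw [gt, gf]
      ring
    have hpair : ∀ a ∈ s, ∀ b ∈ s, a ≠ b → g a = 0 ∨ g b = 0 := by
      intro a _ b _ hab
      by_contra hcon
      push_neg at hcon
      obtain ⟨ha, hb⟩ := hcon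
      have hmem : ∀ c : ℕ × Bool, g c ≠ 0 → x ∈ lorSupportSet (if c.2 then n+1 else 1) c.1 := by
        rintro ⟨ck, cb⟩ hc
        cases cb
        · simp only [hgdef, Bool.false_eq_true, if_false] at hc ⊢
          by_contra hnm
          exact hc (by rw [fk_eq_zero_of_not_mem hnm, neg_zero])
        · simp only [hgdef, if_true] at hc ⊢
          by_contra hnm
          exact hc (fk_eq_zero_of_not_mem hnm)
      have h1 := hmem a ha
      have h2 := hmem b hb
      obtain ⟨hl, hk⟩ := mem_unique h1 h2
      apply hab
      have hbool : a.2 = b.2 := by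
        rcases Bool.eq_false_or_eq_true a.2 with h | h <;>
          rcases Bool.eq_false_or_eq_true b.2 with h' | h' <;>
          rw [h, h'] <;> rw [h, h'] at hl <;> simp at hl ⊢ <;> omega
      exact Prod.ext hk hbool
    rw [hg, abs_rpow_sum s g p hp0.ne' hpair, Finset.mul_sum, hs, Finset.sum_product]
    apply Finset.sum_congr rfl
    intro k _
    rw [Fintype.sum_bool]
    have gt : g (k, true) = fk p (n+1) k x := by simp [hgdef]
    have gf : g (k, false) = -fk p 1 k x := by simp [hgdef]
    rw [gt, gf, abs_neg, abs_fk p hp0, abs_fk p hp0]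
    ring
  rw [tsum_congr key,
    Summable.tsum_finsetSum (f := fun (k : ℕ) (x : ℚ) =>
      (((n:ℝ)^(-(2:ℝ)) * ((2:ℝ)^(-(((n+1):ℕ):ℝ)) * (3:ℝ)^(-(k:ℝ)))) * ind (n+1) k x
           + ((n:ℝ)^(-(2:ℝ)) * ((2:ℝ)^(-(((1):ℕ):ℝ)) * (3:ℝ)^(-(k:ℝ)))) * ind 1 k x))
      (fun k _ => (summable_ind _ _ _).add (summable_ind _ _ _))]
  have hterm : ∀ k ∈ Finset.Icc 1 n,
      (∑' x : ℚ,
        (((n:ℝ)^(-(2:ℝ)) * ((2:ℝ)^(-(((n+1):ℕ):ℝ)) * (3:ℝ)^(-(k:ℝ)))) * ind (n+1) k x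
           + ((n:ℝ)^(-(2:ℝ)) * ((2:ℝ)^(-(((1):ℕ):ℝ)) * (3:ℝ)^(-(k:ℝ)))) * ind 1 k x))
      = 2 * (n:ℝ)^(-(2:ℝ)) := by
    intro k _
    rw [Summable.tsum_add (summable_ind _ _ _) (summable_ind _ _ _), tsum_ind, tsum_ind]
    have e1 : (2:ℝ)^(-(((n+1):ℕ):ℝ)) = ((2:ℝ)^((n+1:ℕ)))⁻¹ := by
      rw [Real.rpow_neg (by norm_num), Real.rpow_natCast]
    have e2 : (2:ℝ)^(-(((1):ℕ):ℝ)) = ((2:ℝ)^((1:ℕ)))⁻¹ := by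
      rw [Real.rpow_neg (by norm_num), Real.rpow_natCast]
    have e3 : (3:ℝ)^(-(k:ℝ)) = ((3:ℝ)^(k:ℕ))⁻¹ := by
      rw [Real.rpow_neg (by norm_num), Real.rpow_natCast]
    rw [e1, e2, e3]
    push_cast
    have h2 : ((2:ℝ)^(n+1)) ≠ 0 := by positivity
    have h3 : ((3:ℝ)^k) ≠ 0 := by positivity
    field_simp
    ring
  rw [Finset.sum_congr rfl hterm, Finset.sum_const, Nat.card_Icc]
  have hne : (n:ℝ) ≠ 0 := by positivity
  have e4 : (n:ℝ)^(-(2:ℝ)) = ((n:ℝ)^(2:ℕ))⁻¹ := by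
    rw [show (-(2:ℝ)) = -((2:ℕ):ℝ) by norm_num, Real.rpow_neg (Nat.cast_nonneg n),
      Real.rpow_natCast]
  rw [e4]
  have hcard : n + 1 - 1 = n := by omega
  rw [hcard, nsmul_eq_mul]
  field_simp
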